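/- Let f : ℝⁿ → ℝⁿ with f(0) = 0 be differentiable at 0 with derivative A, and let G : ℝⁿ → ℝ^{n×m} be continuous at 0 with G(0) = B. Let Q ∈ ℝ^{n×n} and R ∈ ℝ^{m×m} be positive definite, let P ∈ ℝ^{n×n} be a symmetric positive definite matrix satisfying AᵀP + PA − P B R⁻¹ Bᵀ P + Q = 0, and set K = R⁻¹BᵀP. Then there exists δ > 0 such that for all x ∈ ℝⁿ with 0 < ‖x‖ < δ, the Lyapunov derivative of V(x) = (1/2)xᵀPx under the LQR feedback u = −Kx is strictly negative: xᵀP(f(x) − G(x)Kx) < 0. -/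

import Mathlib

open Matrix Filter Topology

set_option maxHeartbeats 1000000

lemma dot_abs_le {n : ℕ} (x v : Fin n → ℝ) : |x ⬝ᵥ v| ≤ (n : ℝ) * (‖x‖ * ‖v‖) := by
  calc |x ⬝ᵥ v| ≤ ∑ i, |x i * v i| := Finset.abs_sum_le_sum_abs _ _
    _ ≤ ∑ _i : Fin n, ‖x‖ * ‖v‖ := by
        refine Finset.sum_le_sum fun i _ => ?_
        rw [abs_mul, ← Real.norm_eq_abs, ← Real.norm_eq_abs]
        exact mul_le_mul (norm_le_pi_norm x i) (norm_le_pi_norm v i) (norm_nonneg _) (norm_nonneg _)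
    _ = (n : ℝ) * (‖x‖ * ‖v‖) := by simp [Finset.card_univ]

lemma mv_abs_le {n m : ℕ} (W : Matrix (Fin n) (Fin m) ℝ) (v : Fin m → ℝ) :
    ‖W *ᵥ v‖ ≤ (∑ i, ∑ j, |W i j|) * ‖v‖ := by
  have hnn : 0 ≤ (∑ i, ∑ j, |W i j|) * ‖v‖ :=
    mul_nonneg (Finset.sum_nonneg fun i _ => Finset.sum_nonneg fun j _ => abs_nonneg _)
      (norm_nonneg _)
  rw [pi_norm_le_iff_of_nonneg hnn]
  intro i
  calc ‖(W *ᵥ v) i‖ = |∑ j, W i j * v j| := rfl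
    _ ≤ ∑ j, |W i j * v j| := Finset.abs_sum_le_sum_abs _ _
    _ ≤ ∑ j, |W i j| * ‖v‖ := by
        refine Finset.sum_le_sum fun j _ => ?_
        rw [abs_mul]
        exact mul_le_mul_of_nonneg_left (norm_le_pi_norm v j) (abs_nonneg _)
    _ = (∑ j, |W i j|) * ‖v‖ := by rw [Finset.sum_mul]
    _ ≤ (∑ i, ∑ j, |W i j|) * ‖v‖ := by
        refine mul_le_mul_of_nonneg_right ?_ (norm_nonneg _)
        exact Finset.single_le_sum (f := fun i => ∑ j, |W i j|)
          (fun i _ => Finset.sum_nonneg fun j _ => abs_nonneg _) (Finset.mem_univ i)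

lemma posdef_lower {n : ℕ} (Q : Matrix (Fin n) (Fin n) ℝ) (hQ : Q.PosDef) :
    ∃ c > 0, ∀ x : Fin n → ℝ, c * ‖x‖ ^ 2 ≤ x ⬝ᵥ Q *ᵥ x := by
  have hcont : Continuous fun x : Fin n → ℝ => x ⬝ᵥ Q *ᵥ x := by
    unfold dotProduct mulVec
    exact continuous_finset_sum _ fun i _ => (continuous_apply i).mul
      (continuous_finset_sum _ fun j _ => continuous_const.mul (continuous_apply j))
  rcases Nat.eq_zero_or_pos n with hn | hn
  · refine ⟨1, one_pos, fun x => ?_⟩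
    subst hn
    have hx : x = 0 := Subsingleton.elim _ _
    have hxn : ‖x‖ = 0 := by rw [hx]; simp
    rw [hxn]
    simp [dotProduct]
  · have : Nonempty (Fin n) := ⟨⟨0, hn⟩⟩
    have hne : (Metric.sphere (0 : Fin n → ℝ) 1).Nonempty :=
      NormedSpace.sphere_nonempty.2 zero_le_one
    obtain ⟨x₀, hx₀mem, hx₀min⟩ :=
      (isCompact_sphere (0 : Fin n → ℝ) 1).exists_isMinOn hne hcont.continuousOn
    have hx₀norm : ‖x₀‖ = 1 := by simpa using hx₀mem
    have hx₀ne : x₀ ≠ 0 := by intro h; rw [h] at hx₀norm; simp at hx₀norm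
    have hc : 0 < x₀ ⬝ᵥ Q *ᵥ x₀ := by simpa using hQ.dotProduct_mulVec_pos hx₀ne
    refine ⟨_, hc, fun x => ?_⟩
    rcases eq_or_ne x 0 with rfl | hx
    · simp
    · have hxn : 0 < ‖x‖ := norm_pos_iff.2 hx
      set u : Fin n → ℝ := ‖x‖⁻¹ • x with hu
      have hun : u ∈ Metric.sphere (0 : Fin n → ℝ) 1 := by
        simp [hu, norm_smul, abs_of_pos (inv_pos.2 hxn), inv_mul_cancel₀ hxn.ne']
      have hmin : x₀ ⬝ᵥ Q *ᵥ x₀ ≤ u ⬝ᵥ Q *ᵥ u := hx₀min hun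
      have hval : u ⬝ᵥ Q *ᵥ u = ‖x‖⁻¹ ^ 2 * (x ⬝ᵥ Q *ᵥ x) := by
        simp [hu, Matrix.mulVec_smul, smul_dotProduct, dotProduct_smul, sq]
        ring
      rw [hval] at hmin
      have h2 : (x₀ ⬝ᵥ Q *ᵥ x₀) * ‖x‖ ^ 2 ≤ ‖x‖⁻¹ ^ 2 * (x ⬝ᵥ Q *ᵥ x) * ‖x‖ ^ 2 :=
        mul_le_mul_of_nonneg_right hmin (sq_nonneg _)
      calc _ * ‖x‖ ^ 2 ≤ ‖x‖⁻¹ ^ 2 * (x ⬝ᵥ Q *ᵥ x) * ‖x‖ ^ 2 := h2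
        _ = x ⬝ᵥ Q *ᵥ x := by field_simp

lemma riccati_identity {n m : ℕ} (A P Q : Matrix (Fin n) (Fin n) ℝ)
    (B : Matrix (Fin n) (Fin m) ℝ)
    (R : Matrix (Fin m) (Fin m) ℝ) (hRsymm : Rᵀ = R) (hPsymm : Pᵀ = P)
    (hRic : Aᵀ * P + P * A - P * B * R⁻¹ * Bᵀ * P + Q = 0)
    (K : Matrix (Fin m) (Fin n) ℝ) (hK : K = R⁻¹ * Bᵀ * P) :
    P * (A - B * K) + (P * (A - B * K))ᵀ = -Q - P * B * R⁻¹ * Bᵀ * P := by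
  have hQ' : Q = P * B * R⁻¹ * Bᵀ * P - Aᵀ * P - P * A := by
    rw [← sub_eq_zero, ← hRic]; abel
  rw [hQ', hK, transpose_mul, transpose_sub, transpose_mul, transpose_mul, transpose_mul,
    transpose_nonsing_inv, hRsymm, transpose_transpose, hPsymm]
  simp only [Matrix.mul_sub, Matrix.sub_mul, Matrix.mul_assoc]
  abel

/-- for the nonlinear input-affine system `ẋ = f(x) + G(x)u` with
`f(0) = 0`, `f` differentiable at `0` with derivative `A`, `G` continuous at `0`
with `G(0) = B`, and `P ≻ 0` symmetric solving the Riccati equation, the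
Lyapunov derivative of `V(x) = ½xᵀPx` under the LQR feedback `u = −Kx`
(`K = R⁻¹BᵀP`) is strictly negative for all `x` with `0 < ‖x‖ < δ`, for some
`δ > 0`. -/
theorem stmt_8 {n m : ℕ}
    (f : (Fin n → ℝ) → (Fin n → ℝ)) (G : (Fin n → ℝ) → Matrix (Fin n) (Fin m) ℝ)
    (A : Matrix (Fin n) (Fin n) ℝ) (B : Matrix (Fin n) (Fin m) ℝ)
    (hf0 : f 0 = 0)
    (hfA : HasFDerivAt f (LinearMap.toContinuousLinearMap A.mulVecLin) 0)
    (hGcont : ContinuousAt G 0) (hG0 : G 0 = B)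
    (Q : Matrix (Fin n) (Fin n) ℝ) (R : Matrix (Fin m) (Fin m) ℝ)
    (hQ : Q.PosDef) (hR : R.PosDef)
    (P : Matrix (Fin n) (Fin n) ℝ) (hP : P.PosDef) (hPsymm : Pᵀ = P)
    (hRic : Aᵀ * P + P * A - P * B * R⁻¹ * Bᵀ * P + Q = 0)
    (K : Matrix (Fin m) (Fin n) ℝ) (hK : K = R⁻¹ * Bᵀ * P) :
    ∃ δ > 0, ∀ x : Fin n → ℝ, 0 < ‖x‖ → ‖x‖ < δ →
      x ⬝ᵥ P *ᵥ (f x - G x *ᵥ (K *ᵥ x)) < 0 := by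
  obtain ⟨c, hc, hcQ⟩ := posdef_lower Q hQ
  set Pc := LinearMap.toContinuousLinearMap P.mulVecLin with hPc
  set Kc := LinearMap.toContinuousLinearMap K.mulVecLin with hKc
  have hPb : ∀ v, ‖P *ᵥ v‖ ≤ ‖Pc‖ * ‖v‖ := fun v => by
    exact Pc.le_opNorm v
  have hKb : ∀ v, ‖K *ᵥ v‖ ≤ ‖Kc‖ * ‖v‖ := fun v => by
    exact Kc.le_opNorm v
  have htB : Bᴴ = Bᵀ := by ext i j; simp [conjTranspose_apply]
  have htR : Rᴴ = Rᵀ := by ext i j; simp [conjTranspose_apply]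
  have htP : Pᴴ = P := by
    rw [show Pᴴ = Pᵀ from by ext i j; simp [conjTranspose_apply], hPsymm]
  have hRsymm : Rᵀ = R := by rw [← htR]; exact hR.1
  have hmat := riccati_identity A P Q B R hRsymm hPsymm hRic K hK
  have hconjPB : (P * B)ᴴ = Bᵀ * P := by
    rw [conjTranspose_mul, htB, htP]
  have hMpsd : (P * B * R⁻¹ * Bᵀ * P).PosSemidef := by
    have h1 := (hR.inv).posSemidef.mul_mul_conjTranspose_same (P * B)
    have h2 : P * B * R⁻¹ * Bᵀ * P = P * B * R⁻¹ * (P * B)ᴴ := by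
      rw [hconjPB, Matrix.mul_assoc]
    rw [h2]
    exact h1
  have hquad : ∀ x : Fin n → ℝ, x ⬝ᵥ P *ᵥ ((A - B * K) *ᵥ x) ≤ -(c / 2) * ‖x‖ ^ 2 := by
    intro x
    have e1 : x ⬝ᵥ P *ᵥ ((A - B * K) *ᵥ x) = x ⬝ᵥ (P * (A - B * K)) *ᵥ x := by
      rw [← Matrix.mulVec_mulVec]
    have e2 : x ⬝ᵥ (P * (A - B * K))ᵀ *ᵥ x = x ⬝ᵥ (P * (A - B * K)) *ᵥ x := by
      rw [Matrix.dotProduct_mulVec, Matrix.vecMul_transpose, dotProduct_comm]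
    have e3 : 2 * (x ⬝ᵥ (P * (A - B * K)) *ᵥ x)
        = x ⬝ᵥ (P * (A - B * K) + (P * (A - B * K))ᵀ) *ᵥ x := by
      rw [Matrix.add_mulVec, dotProduct_add, e2]; ring
    rw [hmat] at e3
    have e4 : x ⬝ᵥ (-Q - P * B * R⁻¹ * Bᵀ * P) *ᵥ x
        = -(x ⬝ᵥ Q *ᵥ x) - x ⬝ᵥ (P * B * R⁻¹ * Bᵀ * P) *ᵥ x := by
      rw [Matrix.sub_mulVec, Matrix.neg_mulVec, dotProduct_sub, dotProduct_neg]
    have e5 : 0 ≤ x ⬝ᵥ (P * B * R⁻¹ * Bᵀ * P) *ᵥ x := by simpa using hMpsd.dotProduct_mulVec_nonneg x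
    have e6 := hcQ x
    rw [e1]
    rw [e4] at e3
    linarith
  have ho1 : (fun x => f x - A *ᵥ x) =o[𝓝 0] (fun x : Fin n → ℝ => x) := by
    have h := hfA.isLittleO
    simpa [hf0] using h
  have ho2 : (fun x => (G x - B) *ᵥ (K *ᵥ x)) =o[𝓝 0] (fun x : Fin n → ℝ => x) := by
    rw [Asymptotics.isLittleO_iff]
    intro ε hε
    have hG : Tendsto G (𝓝 0) (𝓝 B) := by rw [← hG0]; exact hGcont
    have hentry : ∀ i j, Tendsto (fun x => |(G x - B) i j|) (𝓝 0) (𝓝 0) := by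
      intro i j
      have h1 : Tendsto (fun x => G x i j) (𝓝 0) (𝓝 (B i j)) :=
        (((continuous_apply j).tendsto _).comp ((continuous_apply i).tendsto B)).comp hG
      have h2 : Tendsto (fun x => G x i j - B i j) (𝓝 0) (𝓝 0) := by
        simpa using h1.sub_const (B i j)
      simpa using h2.abs
    have hs : Tendsto (fun x => ∑ i, ∑ j, |(G x - B) i j|) (𝓝 0) (𝓝 0) := by
      have := tendsto_finset_sum (Finset.univ : Finset (Fin n))
        (fun i _ => tendsto_finset_sum (Finset.univ : Finset (Fin m))
          (fun j _ => hentry i j))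
      simpa using this
    have hCK : (0:ℝ) ≤ ‖Kc‖ := norm_nonneg _
    have hd : (0:ℝ) < ‖Kc‖ + 1 := by linarith
    have hev : ∀ᶠ x in 𝓝 (0 : Fin n → ℝ),
        (∑ i, ∑ j, |(G x - B) i j|) < ε / (‖Kc‖ + 1) :=
      hs.eventually_lt_const (by positivity)
    filter_upwards [hev] with x hx
    have hsum_nn : 0 ≤ ∑ i, ∑ j, |(G x - B) i j| :=
      Finset.sum_nonneg fun i _ => Finset.sum_nonneg fun j _ => abs_nonneg _
    calc ‖(G x - B) *ᵥ (K *ᵥ x)‖ ≤ (∑ i, ∑ j, |(G x - B) i j|) * ‖K *ᵥ x‖ := mv_abs_le _ _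
      _ ≤ (ε / (‖Kc‖ + 1)) * (‖Kc‖ * ‖x‖) :=
          mul_le_mul hx.le (hKb x) (norm_nonneg _) (by positivity)
      _ = (ε / (‖Kc‖ + 1) * ‖Kc‖) * ‖x‖ := by ring
      _ ≤ ε * ‖x‖ := by
          refine mul_le_mul_of_nonneg_right ?_ (norm_nonneg _)
          rw [div_mul_eq_mul_div, div_le_iff₀ hd]
          nlinarith
  have ho := ho1.sub ho2
  set D : ℝ := (n : ℝ) * ‖Pc‖ + 1 with hD
  have hDpos : 0 < D := by positivity
  set ε : ℝ := c / (4 * D) with hε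
  have hεpos : 0 < ε := by positivity
  have hev := (Asymptotics.isLittleO_iff.1 ho) hεpos
  rw [Metric.eventually_nhds_iff] at hev
  obtain ⟨δ, hδ, hball⟩ := hev
  refine ⟨δ, hδ, fun x hx0 hxδ => ?_⟩
  have hxin : dist x 0 < δ := by simpa [dist_zero_right] using hxδ
  have hbound : ‖(f x - A *ᵥ x) - (G x - B) *ᵥ (K *ᵥ x)‖ ≤ ε * ‖x‖ := by
    simpa using hball hxin
  set hv : Fin n → ℝ := (f x - A *ᵥ x) - (G x - B) *ᵥ (K *ᵥ x) with hhv
  have hdecomp : f x - G x *ᵥ (K *ᵥ x) = (A - B * K) *ᵥ x + hv := by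
    rw [hhv, Matrix.sub_mulVec, Matrix.sub_mulVec, ← Matrix.mulVec_mulVec]
    abel
  have hsplit : x ⬝ᵥ P *ᵥ (f x - G x *ᵥ (K *ᵥ x))
      = x ⬝ᵥ P *ᵥ ((A - B * K) *ᵥ x) + x ⬝ᵥ P *ᵥ hv := by
    rw [hdecomp, Matrix.mulVec_add, dotProduct_add]
  have hterm2 : x ⬝ᵥ P *ᵥ hv ≤ (n : ℝ) * ‖Pc‖ * ε * ‖x‖ ^ 2 := by
    calc x ⬝ᵥ P *ᵥ hv ≤ |x ⬝ᵥ P *ᵥ hv| := le_abs_self _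
      _ ≤ (n : ℝ) * (‖x‖ * ‖P *ᵥ hv‖) := dot_abs_le _ _
      _ ≤ (n : ℝ) * (‖x‖ * (‖Pc‖ * (ε * ‖x‖))) := by
          have h1 : ‖P *ᵥ hv‖ ≤ ‖Pc‖ * (ε * ‖x‖) :=
            (hPb hv).trans (mul_le_mul_of_nonneg_left hbound (norm_nonneg _))
          have h2 : 0 ≤ (n : ℝ) := Nat.cast_nonneg n
          have h3 : 0 ≤ ‖x‖ := norm_nonneg _
          exact mul_le_mul_of_nonneg_left (mul_le_mul_of_nonneg_left h1 h3) h2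
      _ = (n : ℝ) * ‖Pc‖ * ε * ‖x‖ ^ 2 := by ring
  have hfinal : (n : ℝ) * ‖Pc‖ * ε ≤ c / 4 := by
    have h1 : (n : ℝ) * ‖Pc‖ * ε ≤ D * ε := by
      refine mul_le_mul_of_nonneg_right ?_ hεpos.le
      rw [hD]; linarith
    have h2 : D * ε = c / 4 := by
      rw [hε]; field_simp
    linarith
  have hq := hquad x
  have hx2 : 0 < ‖x‖ ^ 2 := by positivity
  have ht2 : x ⬝ᵥ P *ᵥ hv ≤ (c / 4) * ‖x‖ ^ 2 :=
    hterm2.trans (mul_le_mul_of_nonneg_right hfinal (sq_nonneg _))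
  rw [hsplit]
  nlinarith
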